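/- Define h(y₁, y₂, y₃) = 1 − max(y₁/3 + y₂/3 + y₃/3 − 1/2, 0) on [0,1]³. Then h has infinite variation in the sense of Vitali: for every even positive integer n, the cubes of edge 1/n whose vertex indices satisfy i₁ + i₂ + i₃ = (3/2)n − 2 each contribute 1/(3n) to the Vitali variation sum, and there are at least c·n² such cubes for a positive constant c, so the total variation is at least c·n/3, which tends to infinity. -/

import Mathlib

open Filter

/-- The 3-dimensional alternating vertex sum of `h` over the box
`[a₁,b₁] × [a₂,b₂] × [a₃,b₃]`. -/
def altSum3 (h : ℝ → ℝ → ℝ → ℝ) (a₁ a₂ a₃ b₁ b₂ b₃ : ℝ) : ℝ :=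
  h b₁ b₂ b₃ - h a₁ b₂ b₃ - h b₁ a₂ b₃ - h b₁ b₂ a₃
    + h a₁ a₂ b₃ + h a₁ b₂ a₃ + h b₁ a₂ a₃ - h a₁ a₂ a₃

/-- The preintegrated function `h(y) = 1 - (y₁/3 + y₂/3 + y₃/3 - 1/2)₊`. -/
noncomputable def preintCube (y₁ y₂ y₃ : ℝ) : ℝ :=
  1 - max (y₁ / 3 + y₂ / 3 + y₃ / 3 - 1 / 2) 0

lemma altsum_key (n i₁ i₂ i₃ : ℕ) (hn : 0 < n)
    (h : 2 * (i₁ + i₂ + i₃ + 2) = 3 * n) :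
    |altSum3 preintCube ((i₁ : ℝ) / n) ((i₂ : ℝ) / n) ((i₃ : ℝ) / n)
      (((i₁ : ℝ) + 1) / n) (((i₂ : ℝ) + 1) / n) (((i₃ : ℝ) + 1) / n)|
      = 1 / (3 * n) := by
  have hn' : (0:ℝ) < n := by exact_mod_cast hn
  have hs : (2:ℝ) * ((i₁:ℝ) + (i₂:ℝ) + (i₃:ℝ) + 2) = 3 * n := by exact_mod_cast h
  set a₁ := (i₁ : ℝ) / n
  set a₂ := (i₂ : ℝ) / n
  set a₃ := (i₃ : ℝ) / n
  set b₁ := ((i₁ : ℝ) + 1) / n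
  set b₂ := ((i₂ : ℝ) + 1) / n
  set b₃ := ((i₃ : ℝ) + 1) / n
  have e_bbb : b₁ / 3 + b₂ / 3 + b₃ / 3 - 1 / 2 = 1 / (3 * n) := by
    simp only [a₁, a₂, a₃, b₁, b₂, b₃]; field_simp; first | linear_combination hs | linear_combination (3*(n:ℝ)) * hs
  have e_abb : a₁ / 3 + b₂ / 3 + b₃ / 3 - 1 / 2 = 0 := by
    simp only [a₁, a₂, a₃, b₁, b₂, b₃]; field_simp; first | linear_combination hs | linear_combination (3*(n:ℝ)) * hs
  have e_bab : b₁ / 3 + a₂ / 3 + b₃ / 3 - 1 / 2 = 0 := by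
    simp only [a₁, a₂, a₃, b₁, b₂, b₃]; field_simp; first | linear_combination hs | linear_combination (3*(n:ℝ)) * hs
  have e_bba : b₁ / 3 + b₂ / 3 + a₃ / 3 - 1 / 2 = 0 := by
    simp only [a₁, a₂, a₃, b₁, b₂, b₃]; field_simp; first | linear_combination hs | linear_combination (3*(n:ℝ)) * hs
  have e_aab : a₁ / 3 + a₂ / 3 + b₃ / 3 - 1 / 2 = -(1 / (3 * n)) := by
    simp only [a₁, a₂, a₃, b₁, b₂, b₃]; field_simp; first | linear_combination hs | linear_combination (3*(n:ℝ)) * hs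
  have e_aba : a₁ / 3 + b₂ / 3 + a₃ / 3 - 1 / 2 = -(1 / (3 * n)) := by
    simp only [a₁, a₂, a₃, b₁, b₂, b₃]; field_simp; first | linear_combination hs | linear_combination (3*(n:ℝ)) * hs
  have e_baa : b₁ / 3 + a₂ / 3 + a₃ / 3 - 1 / 2 = -(1 / (3 * n)) := by
    simp only [a₁, a₂, a₃, b₁, b₂, b₃]; field_simp; first | linear_combination hs | linear_combination (3*(n:ℝ)) * hs
  have e_aaa : a₁ / 3 + a₂ / 3 + a₃ / 3 - 1 / 2 = -(2 / (3 * n)) := by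
    simp only [a₁, a₂, a₃, b₁, b₂, b₃]; field_simp; first | linear_combination hs | linear_combination (3*(n:ℝ)) * hs
  have hpos : (0:ℝ) ≤ 1 / (3 * n) := by positivity
  have hpos2 : (0:ℝ) ≤ 2 / (3 * n) := by positivity
  unfold altSum3 preintCube
  rw [e_bbb, e_abb, e_bab, e_bba, e_aab, e_aba, e_baa, e_aaa,
    max_eq_left hpos, max_self, max_eq_right (by linarith : -(1/(3*(n:ℝ))) ≤ 0),
    max_eq_right (by linarith : -(2/(3*(n:ℝ))) ≤ 0)]
  rw [show (1:ℝ) - 1/(3*n) - (1-0) - (1-0) - (1-0) + (1-0) + (1-0) + (1-0) - (1-0)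
      = -(1/(3*n)) by ring, abs_neg, abs_of_nonneg hpos]

/-- `h(y) = 1 - (y₁/3+y₂/3+y₃/3-1/2)₊` has infinite Vitali variation on `[0,1]³`:
for every even positive `n`, each cube of edge `1/n` with vertex indices satisfying
`i₁+i₂+i₃ = 3n/2 - 2` contributes `1/(3n)` to the Vitali variation sum, there are at
least `c·n²` such cubes for a positive constant `c`, so the total contribution is at
least `c·n/3`, which tends to infinity. -/
theorem stmt_6 :
    ∃ c : ℝ, 0 < c ∧
      (∀ n : ℕ, Even n → 0 < n →
        (∀ i₁ i₂ i₃ : ℕ, i₁ < n → i₂ < n → i₃ < n → 2 * (i₁ + i₂ + i₃ + 2) = 3 * n →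
          |altSum3 preintCube ((i₁ : ℝ) / n) ((i₂ : ℝ) / n) ((i₃ : ℝ) / n)
            (((i₁ : ℝ) + 1) / n) (((i₂ : ℝ) + 1) / n) (((i₃ : ℝ) + 1) / n)|
            = 1 / (3 * n)) ∧
        c * (n : ℝ) ^ 2 ≤
          (((Finset.range n ×ˢ Finset.range n ×ˢ Finset.range n).filter
            (fun p : ℕ × ℕ × ℕ => 2 * (p.1 + p.2.1 + p.2.2 + 2) = 3 * n)).card : ℝ) ∧
        c * (n : ℝ) / 3 ≤
          ∑ p ∈ (Finset.range n ×ˢ Finset.range n ×ˢ Finset.range n).filter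
              (fun p : ℕ × ℕ × ℕ => 2 * (p.1 + p.2.1 + p.2.2 + 2) = 3 * n),
            |altSum3 preintCube ((p.1 : ℝ) / n) ((p.2.1 : ℝ) / n) ((p.2.2 : ℝ) / n)
              (((p.1 : ℝ) + 1) / n) (((p.2.1 : ℝ) + 1) / n) (((p.2.2 : ℝ) + 1) / n)|) ∧
      Tendsto (fun n : ℕ => c * (n : ℝ) / 3) atTop atTop := by
  refine ⟨1/16, by norm_num, fun n hev hn => ?_, ?_⟩
  · obtain ⟨m, hm⟩ := hev
    have hm' : n = 2 * m := by omega
    have hm0 : 0 < m := by omega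
    have hn' : (0:ℝ) < n := by exact_mod_cast hn
    set T := (Finset.range n ×ˢ Finset.range n ×ˢ Finset.range n).filter
        (fun p : ℕ × ℕ × ℕ => 2 * (p.1 + p.2.1 + p.2.2 + 2) = 3 * n) with hT
    have hcard : (m / 2 + 1) * (m / 2 + 1) ≤ T.card := by
      have := Finset.card_le_card_of_injOn
        (f := fun q : ℕ × ℕ => (m - 1 + q.1, m - 1 + q.2, m - q.1 - q.2))
        (s := Finset.range (m/2+1) ×ˢ Finset.range (m/2+1)) (t := T)
        (by
          rintro ⟨a, b⟩ hq
          simp only [Finset.mem_coe, Finset.mem_product, Finset.mem_range] at hq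
          simp only [hT, Finset.mem_coe, Finset.mem_filter, Finset.mem_product, Finset.mem_range]
          omega)
        (by
          rintro ⟨a, b⟩ ha ⟨a', b'⟩ hb hab
          simp only [Finset.mem_coe, Finset.mem_product, Finset.mem_range] at ha hb
          simp only [Prod.mk.injEq] at hab
          obtain ⟨h1, h2, h3⟩ := hab
          simp only [Prod.mk.injEq]
          omega)
      simpa [Finset.card_product] using this
    have hcR : (((m/2+1) * (m/2+1) : ℕ) : ℝ) ≤ (T.card : ℝ) := Nat.cast_le.mpr hcard
    have hkey : (1/16 : ℝ) * (n:ℝ)^2 ≤ (T.card : ℝ) := by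
      have h4 : (n:ℝ) ≤ 4 * ((m/2+1 : ℕ) : ℝ) := by
        have : n ≤ 4 * (m/2+1) := by omega
        exact_mod_cast this
      push_cast at hcR h4
      nlinarith [Nat.cast_nonneg (α := ℝ) (m/2), hn'.le]
    refine ⟨fun i₁ i₂ i₃ _ _ _ h => altsum_key n i₁ i₂ i₃ hn h, hkey, ?_⟩
    have hsum : ∑ p ∈ T,
        |altSum3 preintCube ((p.1 : ℝ) / n) ((p.2.1 : ℝ) / n) ((p.2.2 : ℝ) / n)
          (((p.1 : ℝ) + 1) / n) (((p.2.1 : ℝ) + 1) / n) (((p.2.2 : ℝ) + 1) / n)|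
        = (T.card : ℝ) * (1 / (3 * n)) := by
      rw [Finset.sum_congr rfl (fun p hp => ?_), Finset.sum_const, nsmul_eq_mul]
      simp only [hT, Finset.mem_filter] at hp
      exact altsum_key n p.1 p.2.1 p.2.2 hn hp.2
    rw [hsum]
    have h5 : (1/16 : ℝ) * (n:ℝ)^2 * (1 / (3*n)) ≤ (T.card : ℝ) * (1 / (3*n)) :=
      mul_le_mul_of_nonneg_right hkey (by positivity)
    calc (1/16 : ℝ) * (n:ℝ) / 3 = (1/16 : ℝ) * (n:ℝ)^2 * (1/(3*n)) := by
          field_simp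
      _ ≤ (T.card : ℝ) * (1 / (3*n)) := h5
  · have h1 : Tendsto (fun n : ℕ => ((1:ℝ)/16) * (n:ℝ)) atTop atTop :=
      tendsto_natCast_atTop_atTop.const_mul_atTop (by norm_num)
    exact h1.atTop_div_const (by norm_num)
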